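/- Let Γ be a group with no nontrivial homomorphism to an abelian group (i.e. Γ has trivial abelianization), H a nontrivial abelian group, 𝓗₀ = ker(p : H^(Γ) → H) where p(x) = Σ_g x_g, and 𝓖₀ = 𝓗₀ ⋊ (Γ × Γ). Then every homomorphism from 𝓖₀ to the circle group (equivalently, to any abelian group) is trivial. -/

import Mathlib

noncomputable section

/-- The left-right translation bijection `k ↦ g k h⁻¹` of `Γ` associated to `(g,h) ∈ Γ × Γ`. -/
def lrEquiv {Γ : Type*} [Group Γ] (p : Γ × Γ) : Γ ≃ Γ :=
  (Equiv.mulRight p.2⁻¹).trans (Equiv.mulLeft p.1)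

/-- The left-right action of `Γ × Γ` on the base `H^(Γ)` of the wreath product,
`((g,h)·x)_k = x_{g⁻¹ k h}`. -/
def lrAddAut (Γ H : Type*) [Group Γ] [AddCommGroup H] : (Γ × Γ) →* Multiplicative (AddAut (Γ →₀ H)) where
  toFun p := Multiplicative.ofAdd (Finsupp.domCongr (lrEquiv p) : (Γ →₀ H) ≃+ (Γ →₀ H))
  map_one' := by
    apply Multiplicative.toAdd.injective
    ext x k
    show x ((lrEquiv 1).symm k) = x k
    congr 1
    simp [lrEquiv]
    rfl
  map_mul' p q := by
    apply Multiplicative.toAdd.injective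
    ext x k
    show x ((lrEquiv (p * q)).symm k) = x ((lrEquiv q).symm ((lrEquiv p).symm k))
    congr 1
    simp only [lrEquiv, Prod.fst_mul, Prod.snd_mul, Equiv.symm_trans_apply,
      Equiv.mulLeft_symm, Equiv.mulRight_symm, Equiv.coe_mulLeft, Equiv.coe_mulRight, inv_inv]
    group

/-- The same action, as an action on the multiplicative version of `H^(Γ)`. -/
def lrMulAut (Γ H : Type*) [Group Γ] [AddCommGroup H] :
    (Γ × Γ) →* MulAut (Multiplicative (Γ →₀ H)) where
  toFun p := AddEquiv.toMultiplicative (Multiplicative.toAdd (lrAddAut Γ H p))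
  map_one' := by
    have h : lrAddAut Γ H 1 = 1 := map_one _
    refine MulEquiv.ext fun x => ?_
    show AddEquiv.toMultiplicative (Multiplicative.toAdd (lrAddAut Γ H 1)) x = x
    rw [h]
    rfl
  map_mul' p q := by
    have h : lrAddAut Γ H (p * q) = lrAddAut Γ H p * lrAddAut Γ H q := map_mul _ _ _
    refine MulEquiv.ext fun x => ?_
    show AddEquiv.toMultiplicative (Multiplicative.toAdd (lrAddAut Γ H (p * q))) x =
      (AddEquiv.toMultiplicative (Multiplicative.toAdd (lrAddAut Γ H p)) *
        AddEquiv.toMultiplicative (Multiplicative.toAdd (lrAddAut Γ H q))) x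
    rw [h]
    rfl

/-- The left-right wreath product `H^(Γ) ⋊ (Γ × Γ)`. -/
abbrev LRWreath (Γ H : Type*) [Group Γ] [AddCommGroup H] :=
  SemidirectProduct (Multiplicative (Γ →₀ H)) (Γ × Γ) (lrMulAut Γ H)

/-- The homomorphism `p : H^(Γ) → H` summing all coordinates. -/
def coordSum (Γ H : Type*) [Group Γ] [AddCommGroup H] : (Γ →₀ H) →+ H :=
  Finsupp.liftAddHom fun _ : Γ => AddMonoidHom.id H

end


lemma coordSum_equivMapDomain {Γ H : Type*} [Group Γ] [AddCommGroup H]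
    (e : Γ ≃ Γ) (z : Γ →₀ H) :
    coordSum Γ H (Finsupp.equivMapDomain e z) = coordSum Γ H z := by
  simp only [coordSum, Finsupp.liftAddHom_apply, Finsupp.equivMapDomain_eq_mapDomain]
  exact Finsupp.sum_mapDomain_index_inj e.injective

/-- The homomorphism `𝓖 → H` induced by summing the coordinates of the base. -/
noncomputable def lrSumHom (Γ H : Type*) [Group Γ] [AddCommGroup H] :
    LRWreath Γ H →* Multiplicative H where
  toFun x := Multiplicative.ofAdd (coordSum Γ H (Multiplicative.toAdd x.left))
  map_one' := by
    show Multiplicative.ofAdd (coordSum Γ H (Multiplicative.toAdd (1 : LRWreath Γ H).left)) = 1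
    rw [SemidirectProduct.one_left]
    simp
  map_mul' x y := by
    show Multiplicative.ofAdd (coordSum Γ H (Multiplicative.toAdd (x * y).left)) = _
    rw [SemidirectProduct.mul_left, toAdd_mul, map_add]
    have h2 : Multiplicative.toAdd ((lrMulAut Γ H x.right) y.left)
        = Finsupp.equivMapDomain (lrEquiv x.right) (Multiplicative.toAdd y.left) := rfl
    rw [h2, coordSum_equivMapDomain]
    rfl

/-- The subgroup `𝓖₀ = 𝓗₀ ⋊ (Γ × Γ)` of the left-right wreath product `𝓖`. -/
noncomputable def lrG0 (Γ H : Type*) [Group Γ] [AddCommGroup H] :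
    Subgroup (LRWreath Γ H) := (lrSumHom Γ H).ker

-- === auxiliary lemmas ===
section Aux
variable {Γ H : Type*} [Group Γ] [AddCommGroup H]

lemma inr_mem_lrG0 (p : Γ × Γ) : (SemidirectProduct.inr p : LRWreath Γ H) ∈ lrG0 Γ H := by
  show lrSumHom Γ H _ = 1
  show Multiplicative.ofAdd (coordSum Γ H (Multiplicative.toAdd
    (SemidirectProduct.inr p : LRWreath Γ H).left)) = 1
  rw [SemidirectProduct.left_inr]
  simp

noncomputable def lrInr (Γ H : Type*) [Group Γ] [AddCommGroup H] : (Γ × Γ) →* lrG0 Γ H :=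
  (SemidirectProduct.inr).codRestrict _ inr_mem_lrG0

lemma inl_mem_lrG0 {x : Γ →₀ H} (hx : coordSum Γ H x = 0) :
    (SemidirectProduct.inl (Multiplicative.ofAdd x) : LRWreath Γ H) ∈ lrG0 Γ H := by
  show lrSumHom Γ H _ = 1
  show Multiplicative.ofAdd (coordSum Γ H (Multiplicative.toAdd
    (SemidirectProduct.inl (Multiplicative.ofAdd x) : LRWreath Γ H).left)) = 1
  rw [SemidirectProduct.left_inl]
  simp [hx]

noncomputable def lrInl0 (x : Γ →₀ H) (hx : coordSum Γ H x = 0) : lrG0 Γ H :=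
  ⟨SemidirectProduct.inl (Multiplicative.ofAdd x), inl_mem_lrG0 hx⟩

lemma lrInl0_congr {x y : Γ →₀ H} (h : x = y) (hx : coordSum Γ H x = 0)
    (hy : coordSum Γ H y = 0) : lrInl0 x hx = lrInl0 y hy := by subst h; rfl

lemma lrInl0_zero (h : coordSum Γ H (0 : Γ →₀ H) = 0) : lrInl0 (0 : Γ →₀ H) h = 1 := rfl

lemma lrInl0_add {x y : Γ →₀ H} (hx : coordSum Γ H x = 0) (hy : coordSum Γ H y = 0) :
    lrInl0 (x + y) (by rw [map_add, hx, hy, add_zero]) = lrInl0 x hx * lrInl0 y hy := by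
  apply Subtype.ext
  show SemidirectProduct.inl (Multiplicative.ofAdd (x + y)) = _ * _
  rw [show Multiplicative.ofAdd (x + y) =
      Multiplicative.ofAdd x * Multiplicative.ofAdd y from rfl, map_mul]
  rfl

lemma lrInl0_conj (p : Γ × Γ) {x : Γ →₀ H} (hx : coordSum Γ H x = 0) :
    lrInr Γ H p * lrInl0 x hx * (lrInr Γ H p)⁻¹ =
      lrInl0 (Finsupp.equivMapDomain (lrEquiv p) x)
        (by rw [coordSum_equivMapDomain, hx]) := by
  apply Subtype.ext
  show SemidirectProduct.inr p * SemidirectProduct.inl (Multiplicative.ofAdd x)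
      * (SemidirectProduct.inr p)⁻¹ = _
  rw [show ((SemidirectProduct.inr p : LRWreath Γ H))⁻¹ = SemidirectProduct.inr p⁻¹ from
    (map_inv SemidirectProduct.inr p).symm, ← SemidirectProduct.inl_aut]
  rfl

end Aux

/-- if `Γ` has trivial abelianization and `H` is a nontrivial abelian group,
then the group `𝓖₀ = 𝓗₀ ⋊ (Γ × Γ)`, with `𝓗₀ = ker (p : H^(Γ) → H)`, has no nontrivial
homomorphism to the circle group. -/
theorem stmt_10 {Γ H : Type*} [Group Γ] [AddCommGroup H] [Nontrivial H]
    (hab : commutator Γ = ⊤)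
    (φ : lrG0 Γ H →* Circle) :
    φ = 1 := by
  classical
  have htriv : ∀ (f : Γ →* Circle) (g : Γ), f g = 1 := by
    intro f g
    have h := Abelianization.commutator_subset_ker f
    rw [hab] at h
    exact h (Subgroup.mem_top g)
  -- triviality on the Γ × Γ part
  have h2 : ∀ p : Γ × Γ, φ (lrInr Γ H p) = 1 := by
    intro p
    have e : p = (p.1, 1) * (1, p.2) := by simp [Prod.ext_iff]
    rw [e, map_mul, map_mul]
    have e1 : φ (lrInr Γ H (p.1, 1)) =
        ((φ.comp (lrInr Γ H)).comp (MonoidHom.inl Γ Γ)) p.1 := rfl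
    have e2 : φ (lrInr Γ H (1, p.2)) =
        ((φ.comp (lrInr Γ H)).comp (MonoidHom.inr Γ Γ)) p.2 := rfl
    rw [e1, e2, htriv, htriv, one_mul]
  -- conjugation invariance
  have hconj : ∀ (p : Γ × Γ) (x : Γ →₀ H) (hx : coordSum Γ H x = 0),
      φ (lrInl0 (Finsupp.equivMapDomain (lrEquiv p) x)
        (by rw [coordSum_equivMapDomain, hx])) = φ (lrInl0 x hx) := by
    intro p x hx
    rw [← lrInl0_conj p hx, map_mul, map_mul, map_inv, h2, one_mul, inv_one, mul_one]
  have hsingle : ∀ (j : Γ) (a : H),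
      coordSum Γ H (Finsupp.single j a - Finsupp.single 1 a) = 0 := by
    intro j a
    rw [map_sub]
    simp [coordSum, Finsupp.liftAddHom_apply_single]
  -- triviality on single-difference generators
  have hθ : ∀ (a : H) (j : Γ),
      φ (lrInl0 (Finsupp.single j a - Finsupp.single 1 a) (hsingle j a)) = 1 := by
    intro a
    have hmapmul : ∀ j k : Γ,
        φ (lrInl0 (Finsupp.single (j * k) a - Finsupp.single 1 a) (hsingle (j * k) a)) =
        φ (lrInl0 (Finsupp.single j a - Finsupp.single 1 a) (hsingle j a)) *
        φ (lrInl0 (Finsupp.single k a - Finsupp.single 1 a) (hsingle k a)) := by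
      intro j k
      have hmap : Finsupp.equivMapDomain (lrEquiv (j, (1 : Γ)))
          (Finsupp.single k a - Finsupp.single 1 a) =
            Finsupp.single (j * k) a - Finsupp.single j a := by
        have hs := map_sub (Finsupp.domCongr (M := H) (lrEquiv (j, (1 : Γ))))
          (Finsupp.single k a) (Finsupp.single 1 a)
        simp only [Finsupp.domCongr_apply] at hs
        rw [hs, Finsupp.equivMapDomain_single, Finsupp.equivMapDomain_single]
        simp [lrEquiv]
      have hz : coordSum Γ H (Finsupp.single (j * k) a - Finsupp.single j a) = 0 := by
        rw [map_sub]
        simp [coordSum, Finsupp.liftAddHom_apply_single]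
      have h1 : φ (lrInl0 (Finsupp.single (j * k) a - Finsupp.single j a) hz) =
          φ (lrInl0 (Finsupp.single k a - Finsupp.single 1 a) (hsingle k a)) := by
        rw [← hconj (j, 1) _ (hsingle k a)]
        exact congrArg φ (lrInl0_congr hmap.symm _ _)
      have hdecomp : Finsupp.single (j * k) a - Finsupp.single 1 a =
          (Finsupp.single (j * k) a - Finsupp.single j a) +
            (Finsupp.single j a - Finsupp.single 1 a) := by abel
      rw [lrInl0_congr hdecomp (hsingle (j * k) a)
        (by rw [map_add, hz, hsingle, add_zero]), lrInl0_add hz (hsingle j a), map_mul, h1]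
      exact mul_comm _ _
    have hone : φ (lrInl0 (Finsupp.single (1 : Γ) a - Finsupp.single 1 a) (hsingle 1 a)) = 1 := by
      rw [lrInl0_congr (sub_self _) (hsingle 1 a) (map_zero _), lrInl0_zero, map_one]
    set T : Γ →* Circle :=
      { toFun := fun j =>
          φ (lrInl0 (Finsupp.single j a - Finsupp.single 1 a) (hsingle j a))
        map_one' := hone
        map_mul' := hmapmul }
    intro j
    exact htriv T j
  -- triviality on all of 𝓗₀
  have hbase : ∀ (x : Γ →₀ H) (hx : coordSum Γ H x = 0), φ (lrInl0 x hx) = 1 := by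
    have hd : ∀ x : Γ →₀ H,
        coordSum Γ H (x - Finsupp.single 1 (coordSum Γ H x)) = 0 := by
      intro x
      rw [map_sub]
      simp [coordSum, Finsupp.liftAddHom_apply_single]
    set Φ : (Γ →₀ H) →+ Additive Circle :=
      { toFun := fun x =>
          Additive.ofMul (φ (lrInl0 (x - Finsupp.single 1 (coordSum Γ H x)) (hd x)))
        map_zero' := by
          rw [lrInl0_congr (by simp) (hd 0) (map_zero _), lrInl0_zero, map_one]
          rfl
        map_add' := by
          intro x y
          have he : (x + y) - Finsupp.single 1 (coordSum Γ H (x + y)) =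
              (x - Finsupp.single 1 (coordSum Γ H x)) +
                (y - Finsupp.single 1 (coordSum Γ H y)) := by
            rw [map_add, Finsupp.single_add]
            abel
          rw [lrInl0_congr he (hd (x + y)) (by rw [map_add, hd, hd, add_zero]),
            lrInl0_add (hd x) (hd y), map_mul]
          rfl } with hΦ
    have hΦ0 : Φ = 0 := by
      apply Finsupp.addHom_ext
      intro j b
      have hcs : coordSum Γ H (Finsupp.single j b) = b := by
        simp [coordSum, Finsupp.liftAddHom_apply_single]
      show Additive.ofMul (φ (lrInl0 _ (hd (Finsupp.single j b)))) = 0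
      rw [lrInl0_congr (by rw [hcs]) (hd (Finsupp.single j b)) (hsingle j b), hθ]
      rfl
    intro x hx
    have := DFunLike.congr_fun hΦ0 x
    rw [hΦ] at this
    simp only [AddMonoidHom.coe_mk, ZeroHom.coe_mk, AddMonoidHom.zero_apply] at this
    have h1 : φ (lrInl0 (x - Finsupp.single 1 (coordSum Γ H x)) (hd x)) = 1 := by
      have := congrArg Additive.toMul this
      simpa using this
    rw [← h1]
    exact congrArg φ (lrInl0_congr (by rw [hx]; simp) hx (hd x))
  -- assemble
  ext g
  obtain ⟨w, hw⟩ := g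
  have hx : coordSum Γ H (Multiplicative.toAdd w.left) = 0 := by
    have hw' : lrSumHom Γ H w = 1 := hw
    have : Multiplicative.ofAdd (coordSum Γ H (Multiplicative.toAdd w.left)) = 1 := hw'
    exact ofAdd_eq_one.mp this
  have hg : (⟨w, hw⟩ : lrG0 Γ H) =
      lrInl0 (Multiplicative.toAdd w.left) hx * lrInr Γ H w.right := by
    apply Subtype.ext
    show w = SemidirectProduct.inl (Multiplicative.ofAdd (Multiplicative.toAdd w.left))
      * SemidirectProduct.inr w.right
    rw [ofAdd_toAdd, SemidirectProduct.inl_left_mul_inr_right]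
  rw [hg, map_mul, hbase, h2, one_mul]
  rfl
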